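/- Let (a_n)_{n≥1} and (b_n)_{n≥1} be strictly decreasing sequences of positive real numbers with a_n → 0 and b_n → 0, and suppose that (b_n - b_{n+1})/(a_n - a_{n+1}) → 1 as n → ∞. Then the piecewise linear map f : ℝ → ℝ defined by f(x) = x for x ≤ 0, f(x) = ((a_n - x) b_{n+1} + (x - a_{n+1}) b_n)/(a_n - a_{n+1}) for a_{n+1} ≤ x ≤ a_n, and f(x) = x - a₁ + b₁ for x > a₁, is bi-Lipschitz, satisfies f(a_n) = b_n for all n, and is differentiable at 0 with f'(0) = 1. -/

import Mathlib

open Filter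

lemma stmt4_tele (u v : ℕ → ℝ) (N : ℕ)
    (h : ∀ k, N ≤ k → u k - u (k + 1) ≤ v k - v (k + 1)) :
    ∀ n m, N ≤ n → n ≤ m → u n - u m ≤ v n - v m := by
  intro n m hn hm
  induction m, hm using Nat.le_induction with
  | base => simp
  | succ m hm ih => have := h m (hn.trans hm); linarith

lemma stmt4_anti (a : ℕ → ℝ) (hadec : ∀ n, 1 ≤ n → a (n + 1) < a n) :
    ∀ n m, 1 ≤ n → n ≤ m → a m ≤ a n := by
  intro n m hn hm
  induction m, hm using Nat.le_induction with
  | base => exact le_refl _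
  | succ m hm ih => exact (le_of_lt (hadec m (hn.trans hm))).trans ih

lemma stmt4_mem (a : ℕ → ℝ) (halim : Tendsto a atTop (nhds 0))
    (t : ℝ) (ht : 0 < t) (ht1 : t ≤ a 1) :
    ∃ n, 1 ≤ n ∧ a (n + 1) ≤ t ∧ t ≤ a n := by
  have hev : ∀ᶠ n in atTop, a n < t := halim.eventually (gt_mem_nhds ht)
  have hex : ∃ k, a (k + 2) < t := by
    obtain ⟨m, hm1, hm2⟩ := (hev.and (eventually_ge_atTop 2)).exists
    exact ⟨m - 2, by rwa [Nat.sub_add_cancel hm2]⟩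
  classical
  set k0 := Nat.find hex with hk0
  refine ⟨k0 + 1, by omega, (Nat.find_spec hex).le, ?_⟩
  rcases Nat.eq_zero_or_pos k0 with h0 | h0
  · rw [h0]; exact ht1
  · have := Nat.find_min hex (show k0 - 1 < k0 by omega)
    push_neg at this
    have e : k0 - 1 + 2 = k0 + 1 := by omega
    rw [e] at this
    exact this

lemma stmt4_lim_ub (a b : ℕ → ℝ) (c : ℝ) (N : ℕ)
    (halim : Tendsto a atTop (nhds 0)) (hblim : Tendsto b atTop (nhds 0))
    (h : ∀ k, N ≤ k → b k - b (k + 1) ≤ c * (a k - a (k + 1))) :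
    ∀ n, N ≤ n → b n ≤ c * a n := by
  intro n hn
  have htl := stmt4_tele b (fun k => c * a k) N
    (fun k hk => by have := h k hk; beta_reduce; linarith [mul_sub c (a k) (a (k+1))]) n
  have h1 : Tendsto (fun m => b n - b m) atTop (nhds (b n)) := by
    simpa using tendsto_const_nhds.sub hblim
  have h2 : Tendsto (fun m => c * a n - c * a m) atTop (nhds (c * a n)) := by
    simpa using tendsto_const_nhds.sub (halim.const_mul c)
  have := le_of_tendsto_of_tendsto h1 h2
    (by filter_upwards [eventually_ge_atTop n] with m hm using htl m hn hm)
  linarith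

lemma stmt4_lim_lb (a b : ℕ → ℝ) (c : ℝ) (N : ℕ)
    (halim : Tendsto a atTop (nhds 0)) (hblim : Tendsto b atTop (nhds 0))
    (h : ∀ k, N ≤ k → c * (a k - a (k + 1)) ≤ b k - b (k + 1)) :
    ∀ n, N ≤ n → c * a n ≤ b n := by
  intro n hn
  have htl := stmt4_tele (fun k => c * a k) b N
    (fun k hk => by have := h k hk; beta_reduce; linarith [mul_sub c (a k) (a (k+1))]) n
  have h1 : Tendsto (fun m => b n - b m) atTop (nhds (b n)) := by
    simpa using tendsto_const_nhds.sub hblim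
  have h2 : Tendsto (fun m => c * a n - c * a m) atTop (nhds (c * a n)) := by
    simpa using tendsto_const_nhds.sub (halim.const_mul c)
  have := le_of_tendsto_of_tendsto h2 h1
    (by filter_upwards [eventually_ge_atTop n] with m hm using htl m hn hm)
  linarith

lemma stmt4_L (a b : ℕ → ℝ)
    (hadec : ∀ n ≥ 1, a (n + 1) < a n) (hbdec : ∀ n ≥ 1, b (n + 1) < b n)
    (hratio : Tendsto (fun n => (b n - b (n + 1)) / (a n - a (n + 1))) atTop (nhds 1)) :
    ∃ L : ℝ, 1 < L ∧ ∀ n, 1 ≤ n →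
      L⁻¹ * (a n - a (n + 1)) ≤ b n - b (n + 1) ∧ b n - b (n + 1) ≤ L * (a n - a (n + 1)) := by
  set s : ℕ → ℝ := fun n => (b n - b (n + 1)) / (a n - a (n + 1)) with hs
  obtain ⟨N0, hN0⟩ : ∃ N, ∀ n, N ≤ n → |s n - 1| < 1/2 := by
    have := (Metric.tendsto_atTop.mp hratio) (1/2) (by norm_num)
    obtain ⟨N, hN⟩ := this
    exact ⟨N, fun n hn => by simpa [Real.dist_eq] using hN n hn⟩
  set S : ℝ := ∑ k ∈ Finset.range (N0 + 1), (|s k| + |s k|⁻¹) with hS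
  have hS0 : 0 ≤ S := Finset.sum_nonneg fun k _ => by positivity
  refine ⟨2 + S, by linarith, ?_⟩
  intro n hn
  have hd : 0 < a n - a (n + 1) := sub_pos.2 (hadec n hn)
  have hb : 0 < b n - b (n + 1) := sub_pos.2 (hbdec n hn)
  have hsn : 0 < s n := div_pos hb hd
  have hL0 : (0:ℝ) < 2 + S := by linarith
  have hseq : b n - b (n + 1) = s n * (a n - a (n + 1)) := (div_mul_cancel₀ _ hd.ne').symm
  have hkey : (2 + S)⁻¹ ≤ s n ∧ s n ≤ 2 + S := by
    by_cases hnN : N0 ≤ n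
    · have h1 := hN0 n hnN
      rw [abs_lt] at h1
      constructor
      · have : (2 + S)⁻¹ ≤ (2:ℝ)⁻¹ := by
          apply inv_anti₀ (by norm_num) (by linarith)
        linarith
      · linarith
    · push_neg at hnN
      have hmem : n ∈ Finset.range (N0 + 1) := Finset.mem_range.2 (by omega)
      have hterm : |s n| + |s n|⁻¹ ≤ S :=
        Finset.single_le_sum (f := fun k => |s k| + |s k|⁻¹) (fun k _ => by positivity) hmem
      have habs : |s n| = s n := abs_of_pos hsn
      rw [habs] at hterm
      have hip : 0 < (s n)⁻¹ := inv_pos.2 hsn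
      constructor
      · have h2 : (s n)⁻¹ ≤ 2 + S := by linarith
        have := inv_anti₀ hip h2
        rwa [inv_inv] at this
      · linarith
  constructor
  · rw [hseq]
    nlinarith [hkey.1, hd.le, mul_le_mul_of_nonneg_right hkey.1 hd.le]
  · rw [hseq]
    nlinarith [mul_le_mul_of_nonneg_right hkey.2 hd.le]

set_option maxHeartbeats 1000000 in
theorem stmt4 (a b : ℕ → ℝ) (hapos : ∀ n ≥ 1, 0 < a n) (hbpos : ∀ n ≥ 1, 0 < b n)
    (hadec : ∀ n ≥ 1, a (n + 1) < a n) (hbdec : ∀ n ≥ 1, b (n + 1) < b n)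
    (halim : Tendsto a atTop (nhds 0)) (hblim : Tendsto b atTop (nhds 0))
    (hratio : Tendsto (fun n => (b n - b (n + 1)) / (a n - a (n + 1))) atTop (nhds 1))
    (f : ℝ → ℝ)
    (hf0 : ∀ x ≤ (0:ℝ), f x = x)
    (hfmid : ∀ n ≥ 1, ∀ x ∈ Set.Icc (a (n + 1)) (a n),
      f x = ((a n - x) * b (n + 1) + (x - a (n + 1)) * b n) / (a n - a (n + 1)))
    (hftop : ∀ x > a 1, f x = x - a 1 + b 1) :
    (∃ L : ℝ, 1 < L ∧ ∀ x y : ℝ,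
        L⁻¹ * |x - y| ≤ |f x - f y| ∧ |f x - f y| ≤ L * |x - y|) ∧
      (∀ n ≥ 1, f (a n) = b n) ∧ HasDerivAt f 1 0 := by
  -- basic facts
  have hfa : ∀ n, 1 ≤ n → f (a n) = b n := by
    intro n hn
    have hd : a (n + 1) < a n := hadec n hn
    rw [hfmid n hn (a n) ⟨hd.le, le_refl _⟩]
    rw [div_eq_iff (by linarith : a n - a (n + 1) ≠ 0)]
    ring
  have hfz : f 0 = 0 := hf0 0 (le_refl _)
  have htop' : ∀ x, a 1 ≤ x → f x = x - a 1 + b 1 := by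
    intro x hx
    rcases eq_or_lt_of_le hx with h | h
    · rw [← h, hfa 1 (le_refl _)]; ring
    · exact hftop x h
  -- slope formula on segments
  have hseg : ∀ n, 1 ≤ n → ∀ x ∈ Set.Icc (a (n + 1)) (a n), ∀ y ∈ Set.Icc (a (n + 1)) (a n),
      f y - f x = (b n - b (n + 1)) * (y - x) / (a n - a (n + 1)) := by
    intro n hn x hx y hy
    have hd : a (n + 1) < a n := hadec n hn
    have hd0 : a n - a (n + 1) ≠ 0 := by linarith
    rw [hfmid n hn x hx, hfmid n hn y hy]
    field_simp
    ring
  -- bi-Lipschitz constant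
  obtain ⟨L, hL1, hLd⟩ := stmt4_L a b hadec hbdec hratio
  have hL0 : (0:ℝ) < L := by linarith
  have hLi : (0:ℝ) < L⁻¹ := inv_pos.2 hL0
  have hLi1 : L⁻¹ ≤ 1 := by
    have := inv_anti₀ (by norm_num : (0:ℝ) < 1) hL1.le
    simpa using this
  -- grid bounds at infinity
  have hCub : ∀ n, 1 ≤ n → b n ≤ L * a n :=
    stmt4_lim_ub a b L 1 halim hblim (fun k hk => (hLd k hk).2)
  have hClb : ∀ n, 1 ≤ n → L⁻¹ * a n ≤ b n :=
    stmt4_lim_lb a b L⁻¹ 1 halim hblim (fun k hk => (hLd k hk).1)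
  -- two-point bound predicate
  set P : ℝ → ℝ → Prop := fun x y => L⁻¹ * (y - x) ≤ f y - f x ∧ f y - f x ≤ L * (y - x)
    with hP
  have htrans : ∀ x z y, P x z → P z y → P x y := by
    intro x z y h1 h2
    constructor
    · have e : L⁻¹ * (y - x) = L⁻¹ * (z - x) + L⁻¹ * (y - z) := by ring
      have := h1.1; have := h2.1; linarith
    · have e : L * (y - x) = L * (z - x) + L * (y - z) := by ring
      have := h1.2; have := h2.2; linarith
  have hlin : ∀ x y : ℝ, x ≤ y → f y - f x = y - x → P x y := by
    intro x y hxy he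
    simp only [hP]
    constructor
    · rw [he]; nlinarith
    · rw [he]; nlinarith
  have Pseg : ∀ n, 1 ≤ n → ∀ x ∈ Set.Icc (a (n + 1)) (a n), ∀ y ∈ Set.Icc (a (n + 1)) (a n),
      x ≤ y → P x y := by
    intro n hn x hx y hy hxy
    have hd : 0 < a n - a (n + 1) := sub_pos.2 (hadec n hn)
    have he := hseg n hn x hx y hy
    obtain ⟨hl, hu⟩ := hLd n hn
    have hyx : (0:ℝ) ≤ y - x := by linarith
    simp only [hP]
    constructor
    · rw [he, le_div_iff₀ hd]
      nlinarith [mul_le_mul_of_nonneg_right hl hyx]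
    · rw [he, div_le_iff₀ hd]
      nlinarith [mul_le_mul_of_nonneg_right hu hyx]
  have Prefl : ∀ x, P x x := by
    intro x; simp only [hP]; constructor <;> simp
  have Pgrid : ∀ k l, 1 ≤ k → k ≤ l → P (a l) (a k) := by
    intro k l hk hkl
    have e1 : f (a l) = b l := hfa l (hk.trans hkl)
    have e2 : f (a k) = b k := hfa k hk
    simp only [hP]
    rw [e1, e2]
    constructor
    · have := stmt4_tele (fun j => L⁻¹ * a j) b 1
        (fun j hj => by have := (hLd j hj).1; beta_reduce; linarith [mul_sub L⁻¹ (a j) (a (j+1))])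
        k l hk hkl
      beta_reduce at this
      linarith [mul_sub L⁻¹ (a k) (a l)]
    · have := stmt4_tele b (fun j => L * a j) 1
        (fun j hj => by have := (hLd j hj).2; beta_reduce; linarith [mul_sub L (a j) (a (j+1))])
        k l hk hkl
      beta_reduce at this
      linarith [mul_sub L (a k) (a l)]
  have Pto : ∀ n, 1 ≤ n → P 0 (a n) := by
    intro n hn
    simp only [hP]
    rw [hfa n hn, hfz]
    constructor
    · have := hClb n hn; linarith
    · have := hCub n hn; linarith
  have Ptop : ∀ x y : ℝ, a 1 ≤ x → x ≤ y → P x y := by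
    intro x y hx hxy
    apply hlin x y hxy
    rw [htop' x hx, htop' y (hx.trans hxy)]
    ring
  have P0y : ∀ y : ℝ, 0 ≤ y → P 0 y := by
    intro y hy
    rcases eq_or_lt_of_le hy with h | h
    · rw [← h]; exact Prefl 0
    · by_cases hy1 : y ≤ a 1
      · obtain ⟨n, hn, h1, h2⟩ := stmt4_mem a halim y h hy1
        exact htrans 0 (a (n + 1)) y (Pto (n + 1) (by omega))
          (Pseg n hn (a (n + 1)) ⟨le_refl _, (hadec n hn).le⟩ y ⟨h1, h2⟩ h1)
      · push_neg at hy1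
        exact htrans 0 (a 1) y (Pto 1 (le_refl _)) (Ptop (a 1) y (le_refl _) hy1.le)
  have Pan : ∀ n, 1 ≤ n → ∀ y : ℝ, a n ≤ y → P (a n) y := by
    intro n hn y hy
    rcases eq_or_lt_of_le hy with h | h
    · rw [h]; exact Prefl y
    · by_cases hy1 : y ≤ a 1
      · have hy0 : 0 < y := lt_trans (hapos n hn) h
        obtain ⟨m, hm, h1, h2⟩ := stmt4_mem a halim y hy0 hy1
        have hmn : m < n := by
          by_contra hc
          push_neg at hc
          have := stmt4_anti a hadec n m hn hc
          linarith
        have hm1n : m + 1 ≤ n := hmn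
        refine htrans (a n) (a (m + 1)) y (Pgrid (m + 1) n (by omega) hm1n) ?_
        exact Pseg m hm (a (m + 1)) ⟨le_refl _, (hadec m hm).le⟩ y ⟨h1, h2⟩ h1
      · push_neg at hy1
        exact htrans (a n) (a 1) y (Pgrid 1 n (le_refl _) hn) (Ptop (a 1) y (le_refl _) hy1.le)
  have key : ∀ x y : ℝ, x ≤ y → P x y := by
    intro x y hxy
    by_cases hy0 : y ≤ 0
    · exact hlin x y hxy (by rw [hf0 y hy0, hf0 x (hxy.trans hy0)])
    · push_neg at hy0
      by_cases hx0 : x ≤ 0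
      · exact htrans x 0 y (hlin x 0 hx0 (by rw [hfz, hf0 x hx0])) (P0y y hy0.le)
      · push_neg at hx0
        by_cases hx1 : a 1 < x
        · exact Ptop x y hx1.le hxy
        · push_neg at hx1
          obtain ⟨n, hn, h1, h2⟩ := stmt4_mem a halim x hx0 hx1
          by_cases hy : y ≤ a n
          · exact Pseg n hn x ⟨h1, h2⟩ y ⟨h1.trans hxy, hy⟩ hxy
          · push_neg at hy
            exact htrans x (a n) y (Pseg n hn x ⟨h1, h2⟩ (a n) ⟨(hadec n hn).le, le_refl _⟩ h2)
              (Pan n hn y hy.le)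
  refine ⟨⟨L, hL1, ?_⟩, hfa, ?_⟩
  · -- bi-Lipschitz
    intro x y
    rcases le_total x y with h | h
    · obtain ⟨h1, h2⟩ := key x y h
      have h0 : 0 ≤ f y - f x := le_trans (by nlinarith) h1
      have e1 : |x - y| = y - x := by rw [abs_sub_comm]; exact abs_of_nonneg (by linarith)
      have e2 : |f x - f y| = f y - f x := by rw [abs_sub_comm]; exact abs_of_nonneg h0
      rw [e1, e2]; exact ⟨h1, h2⟩
    · obtain ⟨h1, h2⟩ := key y x h
      have h0 : 0 ≤ f x - f y := le_trans (by nlinarith) h1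
      have e1 : |x - y| = x - y := abs_of_nonneg (by linarith)
      have e2 : |f x - f y| = f x - f y := abs_of_nonneg h0
      rw [e1, e2]; exact ⟨h1, h2⟩
  · -- derivative at 0
    rw [hasDerivAt_iff_isLittleO, Asymptotics.isLittleO_iff]
    intro c hc
    obtain ⟨N1, hN1⟩ : ∃ N, ∀ n, N ≤ n → |(b n - b (n + 1)) / (a n - a (n + 1)) - 1| < c := by
      have := (Metric.tendsto_atTop.mp hratio) c hc
      obtain ⟨N, hN⟩ := this
      exact ⟨N, fun n hn => by simpa [Real.dist_eq] using hN n hn⟩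
    set N := max N1 1 with hN
    have hNN1 : N1 ≤ N := le_max_left _ _
    have hN1' : 1 ≤ N := le_max_right _ _
    have hdiff : ∀ k, N ≤ k →
        (1 - c) * (a k - a (k + 1)) ≤ b k - b (k + 1) ∧
          b k - b (k + 1) ≤ (1 + c) * (a k - a (k + 1)) := by
      intro k hk
      have hd : 0 < a k - a (k + 1) := sub_pos.2 (hadec k (hN1'.trans hk))
      have h1 := hN1 k (hNN1.trans hk)
      rw [abs_lt] at h1
      have hseq : b k - b (k + 1) = (b k - b (k + 1)) / (a k - a (k + 1)) * (a k - a (k + 1)) :=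
        (div_mul_cancel₀ _ hd.ne').symm
      constructor
      · rw [hseq]; nlinarith
      · rw [hseq]; nlinarith
    have hub : ∀ n, N ≤ n → b n ≤ (1 + c) * a n :=
      stmt4_lim_ub a b (1 + c) N halim hblim (fun k hk => (hdiff k hk).2)
    have hlb : ∀ n, N ≤ n → (1 - c) * a n ≤ b n :=
      stmt4_lim_lb a b (1 - c) N halim hblim (fun k hk => (hdiff k hk).1)
    rw [Metric.eventually_nhds_iff]
    refine ⟨a N, hapos N hN1', ?_⟩
    intro x hx
    rw [Real.dist_eq, sub_zero] at hx
    simp only [hfz, sub_zero, smul_eq_mul, mul_one, Real.norm_eq_abs]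
    by_cases hx0 : x ≤ 0
    · rw [hf0 x hx0]
      simp
      positivity
    · push_neg at hx0
      have hxa : x < a N := lt_of_le_of_lt (le_abs_self x) hx
      have hxa1 : x ≤ a 1 := hxa.le.trans (stmt4_anti a hadec 1 N (le_refl _) hN1')
      obtain ⟨n, hn, h1, h2⟩ := stmt4_mem a halim x hx0 hxa1
      have hnN : N ≤ n := by
        by_contra hcn
        push_neg at hcn
        have : a N ≤ a (n + 1) := stmt4_anti a hadec (n + 1) N (by omega) hcn
        linarith
      have hd : 0 < a n - a (n + 1) := sub_pos.2 (hadec n hn)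
      have hfan : f (a (n + 1)) = b (n + 1) := hfa (n + 1) (by omega)
      have heq := hseg n hn (a (n + 1)) ⟨le_refl _, (hadec n hn).le⟩ x ⟨h1, h2⟩
      rw [hfan] at heq
      -- f x - x = (s - 1)(x - a(n+1)) + (b(n+1) - a(n+1))
      set s := (b n - b (n + 1)) / (a n - a (n + 1)) with hs
      have heq2 : f x - x = (s - 1) * (x - a (n + 1)) + (b (n + 1) - a (n + 1)) := by
        have : f x = b (n + 1) + (b n - b (n + 1)) * (x - a (n + 1)) / (a n - a (n + 1)) := by
          linarith
        rw [this, hs]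
        field_simp
        ring
      have hsb : |s - 1| < c := hN1 n (hNN1.trans hnN)
      have hba : |b (n + 1) - a (n + 1)| ≤ c * a (n + 1) := by
        have hu := hub (n + 1) (by omega)
        have hl := hlb (n + 1) (by omega)
        rw [abs_le]
        constructor <;> nlinarith
      have hxn : 0 ≤ x - a (n + 1) := by linarith
      have han1 : 0 < a (n + 1) := hapos (n + 1) (by omega)
      calc |f x - x| ≤ |(s - 1) * (x - a (n + 1))| + |b (n + 1) - a (n + 1)| := by
            rw [heq2]; exact abs_add_le _ _
        _ = |s - 1| * (x - a (n + 1)) + |b (n + 1) - a (n + 1)| := by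
            rw [abs_mul, abs_of_nonneg hxn]
        _ ≤ c * (x - a (n + 1)) + c * a (n + 1) := by
            have := mul_le_mul_of_nonneg_right hsb.le hxn
            linarith
        _ = c * x := by ring
        _ ≤ c * |x| := by
            have : x ≤ |x| := le_abs_self x
            nlinarith
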